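/- For two agents with x₁ + b < x₂ - b, setting λ = (x₂ - b) - (x₁ + b): for any probability distribution D over ℝ, at least one of E_{y~D}[cost(y, x₁)] ≥ c + λ/2 and E_{y~D}[cost(y, x₂)] ≥ c + λ/2 holds. -/

import Mathlib

open MeasureTheory

noncomputable def cost (b c y x : ℝ) : ℝ := c + min |x - b - y| |x + b - y|

theorem stmt_12 (b c x₁ x₂ : ℝ) (hb : 0 < b) (hc : 0 < c) (hgap : x₁ + b < x₂ - b)
    (μ : Measure ℝ) [IsProbabilityMeasure μ]
    (h1 : Integrable (fun y => cost b c y x₁) μ)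
    (h2 : Integrable (fun y => cost b c y x₂) μ) :
    c + ((x₂ - b) - (x₁ + b)) / 2 ≤ ∫ y, cost b c y x₁ ∂μ ∨
    c + ((x₂ - b) - (x₁ + b)) / 2 ≤ ∫ y, cost b c y x₂ ∂μ := by
  have key : ∀ y, 2*c + ((x₂ - b) - (x₁ + b)) ≤ cost b c y x₁ + cost b c y x₂ := by
    intro y
    unfold cost
    have ha1 : y - (x₁ + b) ≤ |x₁ - b - y| := by
      have := neg_abs_le (x₁ - b - y); linarith [hb.le]
    have ha2 : y - (x₁ + b) ≤ |x₁ + b - y| := by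
      have := neg_abs_le (x₁ + b - y); linarith
    have hb1 : (x₂ - b) - y ≤ |x₂ - b - y| := le_abs_self _
    have hb2 : (x₂ - b) - y ≤ |x₂ + b - y| := by
      have := le_abs_self (x₂ + b - y); linarith [hb.le]
    have m1 : y - (x₁ + b) ≤ min |x₁ - b - y| |x₁ + b - y| := le_min ha1 ha2
    have m2 : (x₂ - b) - y ≤ min |x₂ - b - y| |x₂ + b - y| := le_min hb1 hb2
    linarith
  have hint : 2*c + ((x₂ - b) - (x₁ + b)) ≤ (∫ y, cost b c y x₁ ∂μ) + ∫ y, cost b c y x₂ ∂μ := by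
    have := integral_mono (integrable_const (2*c + ((x₂ - b) - (x₁ + b)))) (h1.add h2) key
    rw [integral_const] at this
    simp at this
    rw [← integral_add h1 h2]
    exact this
  by_contra h
  push_neg at h
  linarith [h.1, h.2]
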